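/- A naive k-fold spanning-forest sparsification preserves high connectivity: given an undirected graph G = (V, E) and an integer k, if E₀ ⊆ E is constructed by iterating k+1 times the operation of adding the edges of a spanning forest of the current graph to E₀ and deleting them from the graph, then |E₀| ≤ (k+1)(|V| − 1), and for every edge uv ∈ E \ E₀, the graph (V, E₀) contains at least k+1 pairwise edge-disjoint paths between u and v. -/

import Mathlib

/-- `F` is a spanning forest of `H`: a maximal acyclic subgraph (on the same vertex set). -/
def IsSpanningForest {V : Type*} (H F : SimpleGraph V) : Prop :=
  F ≤ H ∧ F.IsAcyclic ∧ ∀ F' : SimpleGraph V, F ≤ F' → F' ≤ H → F'.IsAcyclic → F' = F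

open SimpleGraph


lemma acyclic_sup_edge {V : Type*} {G : SimpleGraph V} {u v : V} (hG : G.IsAcyclic)
    (huv : u ≠ v) (hr : ¬ G.Reachable u v) : (G ⊔ SimpleGraph.edge u v).IsAcyclic := by
  intro a c hc
  by_cases he : s(u, v) ∈ c.edges
  · have h1 := (adj_and_reachable_delete_edges_iff_exists_cycle
      (G := G ⊔ SimpleGraph.edge u v)).2 ⟨a, c, hc, he⟩
    refine hr (h1.2.mono ?_)
    intro x y hxy
    simp only [deleteEdges_adj, sdiff_adj, sup_adj, fromEdgeSet_adj, Set.mem_singleton_iff, edge_adj] at hxy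
    rcases hxy with ⟨h2 | h2, h3⟩
    · exact h2
    · exact absurd (by rcases h2.1 with ⟨rfl, rfl⟩ | ⟨rfl, rfl⟩ <;> simp [Sym2.eq_swap]) h3
  · have hsub : ∀ e ∈ c.edges, e ∈ G.edgeSet := by
      intro e hec
      have h1 := c.edges_subset_edgeSet hec
      rw [edgeSet_sup, edge_edgeSet_of_ne huv] at h1
      rcases h1 with h1 | h1
      · exact h1
      · exact absurd (Set.mem_singleton_iff.1 h1 ▸ hec) he
    exact hG (c.transfer G hsub) (hc.transfer hsub)

lemma path_edge_end {V : Type*} {G : SimpleGraph V} {r x : V} :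
    ∀ (p : G.Walk r x), p.IsPath →
    ∀ {e₁ e₂ : Sym2 V}, e₁ ∈ p.edges → e₂ ∈ p.edges → x ∈ e₁ → x ∈ e₂ → e₁ = e₂ := by
  intro p
  induction p with
  | nil => intro _ e₁ e₂ h1; simp at h1
  | @cons r b x h q ih =>
    intro hp e₁ e₂ h1 h2 hx1 hx2
    rw [Walk.cons_isPath_iff] at hp
    have key : ∀ e : Sym2 V, e = s(r, b) → x ∈ e → q.edges = [] := by
      rintro e rfl hxe
      rw [Sym2.mem_iff] at hxe
      rcases hxe with rfl | rfl
      · exact absurd q.end_mem_support hp.2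
      · rw [(Walk.isPath_iff_eq_nil (p := q)).1 hp.1]; rfl
    rw [Walk.edges_cons, List.mem_cons] at h1 h2
    rcases h1 with rfl | h1
    · rcases h2 with rfl | h2
      · rfl
      · rw [key _ rfl hx1] at h2; simp at h2
    · rcases h2 with rfl | h2
      · rw [key _ rfl hx2] at h1; simp at h1
      · exact ih hp.1 h1 h2 hx1 hx2

open Classical in
lemma IsAcyclic.ncard_edgeSet_le {V : Type*} [Fintype V] {G : SimpleGraph V}
    (hG : G.IsAcyclic) : G.edgeSet.ncard ≤ Fintype.card V - 1 := by
  rcases isEmpty_or_nonempty V with hV | hV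
  · have : G.edgeSet = ∅ := by
      ext e
      refine e.ind (fun a b => ?_)
      exact iff_of_false (fun h => hV.elim a) (by simp)
    simp [this]
  -- roots and paths
  set R : V → V := fun x => (G.connectedComponentMk x).out with hR
  have hmk : ∀ x : V, G.connectedComponentMk (R x) = G.connectedComponentMk x := by
    intro x
    exact Quot.out_eq _
  have hreach : ∀ x : V, G.Reachable (R x) x := fun x => ConnectedComponent.exact (hmk x)
  have hPex : ∀ x : V, ∃ p : G.Walk (R x) x, p.IsPath := fun x =>
    ⟨((hreach x).some.toPath : G.Walk _ _), (hreach x).some.toPath.2⟩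
  choose P hP using hPex
  -- key: each edge lies on the root path of one of its endpoints
  have key : ∀ e ∈ G.edgeSet, ∃ x : V, x ∈ e ∧ e ∈ (P x).edges := by
    intro e
    refine e.ind (fun a b hab => ?_) 
    rw [mem_edgeSet] at hab
    have hRab : R a = R b := by
      rw [hR]
      simp only []
      congr 1
      exact ConnectedComponent.sound hab.reachable
    have hbr := isAcyclic_iff_forall_adj_isBridge.1 hG hab
    have hforall := (isBridge_iff_adj_and_forall_walk_mem_edges.1 hbr)
    have hw := hforall ((P a).reverse.append ((P b).copy hRab.symm rfl))
    rw [Walk.edges_append, List.mem_append, Walk.edges_reverse, List.mem_reverse,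
      Walk.edges_copy] at hw
    rcases hw with hw | hw
    · exact ⟨a, by simp, hw⟩
    · exact ⟨b, by simp, hw⟩
  choose f hf1 hf2 using key
  -- a root vertex avoided by all edges
  obtain ⟨v₀⟩ := hV
  set r₀ : V := R v₀ with hr₀
  have hRr₀ : R r₀ = r₀ := by rw [hr₀, hR]; simp only []; rw [hmk v₀]
  have hnil : (P r₀).edges = [] := by
    have h1 : ((P r₀).copy hRr₀ rfl).IsPath := (Walk.isPath_copy _ _ _).2 (hP r₀)
    have h2 := Walk.isPath_iff_eq_nil.1 h1
    have := Walk.edges_copy (P r₀) hRr₀ rfl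
    rw [h2] at this
    simpa using this.symm
  set f' : Sym2 V → V := fun e => if he : e ∈ G.edgeSet then f e he else r₀ with hf'
  have hmaps : ∀ e ∈ G.edgeSet, f' e ∈ ({r₀}ᶜ : Set V) := by
    intro e he
    simp only [hf', dif_pos he, Set.mem_compl_iff, Set.mem_singleton_iff]
    intro hcon
    have := hf2 e he
    rw [hcon, hnil] at this
    simp at this
  have hinj : Set.InjOn f' G.edgeSet := by
    intro e₁ he₁ e₂ he₂ heq
    simp only [hf', dif_pos he₁, dif_pos he₂] at heq
    have h1 := hf2 e₁ he₁
    have h2 := hf2 e₂ he₂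
    rw [heq] at h1
    exact path_edge_end (P (f e₂ he₂)) (hP _) h1 h2 (heq ▸ hf1 e₁ he₁) (hf1 e₂ he₂)
  have hcard := Set.ncard_le_ncard_of_injOn f' hmaps hinj (Set.toFinite _)
  have hcompl : ({r₀}ᶜ : Set V).ncard = Fintype.card V - 1 := by
    rw [Set.compl_eq_univ_diff, Set.ncard_diff (Set.subset_univ _), Set.ncard_univ,
      Nat.card_eq_fintype_card, Set.ncard_singleton]
  rw [hcompl] at hcard
  exact hcard

lemma edges_mapLe {V : Type*} {G G' : SimpleGraph V} (h : G ≤ G') {u v : V}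
    (p : G.Walk u v) : (p.mapLe h).edges = p.edges := by
  simp only [Walk.mapLe, Walk.edges_map, Hom.coe_ofLE]
  convert List.map_id _ using 2
  exact Sym2.map_id

/-- Iterating `k+1` times the operation of taking a spanning forest of the current graph,
adding its edges to `E₀` and deleting them from the graph, yields an edge set `E₀` with
`|E₀| ≤ (k+1)(|V|-1)` such that every edge of `G` outside `E₀` has `k+1` pairwise
edge-disjoint paths between its endpoints in the graph `(V, E₀)`. -/
theorem sparsification_preserves_connectivity {V : Type*} [Fintype V]
    (G : SimpleGraph V) (k : ℕ) (F : Fin (k + 1) → SimpleGraph V)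
    (hF : ∀ i : Fin (k + 1),
      IsSpanningForest (G.deleteEdges (⋃ j ∈ Set.Iio i, (F j).edgeSet)) (F i)) :
    (⋃ i, (F i).edgeSet).ncard ≤ (k + 1) * (Fintype.card V - 1) ∧
    ∀ u v : V, G.Adj u v → s(u, v) ∉ ⋃ i, (F i).edgeSet →
      ∃ P : Fin (k + 1) → (SimpleGraph.fromEdgeSet (⋃ i, (F i).edgeSet)).Walk u v,
        (∀ i, (P i).IsPath) ∧
        ∀ i j, i ≠ j → ∀ e ∈ (P i).edges, e ∉ (P j).edges := by
  classical
  letI : ∀ i, Fintype ((F i).edgeSet) := fun i => Fintype.ofFinite _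
  -- edge sets of distinct forests are disjoint
  have hdisj : ∀ i j : Fin (k + 1), j < i → ∀ e, e ∈ (F i).edgeSet → e ∈ (F j).edgeSet → False := by
    intro i j hji e hei hej
    have h1 : e ∈ (G.deleteEdges (⋃ j' ∈ Set.Iio i, (F j').edgeSet)).edgeSet :=
      edgeSet_mono (hF i).1 hei
    rw [edgeSet_deleteEdges] at h1
    exact h1.2 (Set.mem_biUnion hji hej)
  constructor
  · -- cardinality bound
    have hcoe : (⋃ i, (F i).edgeSet) =
        ↑(Finset.univ.biUnion (fun i => (F i).edgeFinset)) := by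
      ext e; simp [Set.mem_iUnion]
    rw [hcoe, Set.ncard_coe_finset]
    calc (Finset.univ.biUnion (fun i => (F i).edgeFinset)).card
        ≤ ∑ i, (F i).edgeFinset.card := Finset.card_biUnion_le
      _ ≤ ∑ _i : Fin (k + 1), (Fintype.card V - 1) := by
          refine Finset.sum_le_sum fun i _ => ?_
          have := IsAcyclic.ncard_edgeSet_le (hF i).2.1
          rwa [← Set.ncard_coe_finset ((F i).edgeFinset), coe_edgeFinset]
      _ = (k + 1) * (Fintype.card V - 1) := by
          simp [Finset.sum_const, Finset.card_univ, mul_comm]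
  · intro u v huv hnotin
    have hne : u ≠ v := huv.ne
    -- each forest connects u and v
    have hreach : ∀ i, (F i).Reachable u v := by
      intro i
      by_contra hnr
      have hacyc := acyclic_sup_edge (hF i).2.1 hne hnr
      have hHadj : (G.deleteEdges (⋃ j ∈ Set.Iio i, (F j).edgeSet)).Adj u v := by
        rw [deleteEdges_adj]
        refine ⟨huv, fun hmem => hnotin ?_⟩
        rw [Set.mem_iUnion₂] at hmem
        obtain ⟨j, _, hj⟩ := hmem
        exact Set.mem_iUnion.2 ⟨j, hj⟩
      have hle' : F i ⊔ SimpleGraph.edge u v ≤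
          G.deleteEdges (⋃ j ∈ Set.Iio i, (F j).edgeSet) := by
        refine sup_le (hF i).1 ?_
        intro a b hab
        rw [edge_adj] at hab
        rcases hab.1 with ⟨rfl, rfl⟩ | ⟨rfl, rfl⟩
        · exact hHadj
        · exact hHadj.symm
      have heq := (hF i).2.2 _ le_sup_left hle' hacyc
      have hadj : (F i).Adj u v := by
        rw [← heq]
        exact Or.inr (by rw [edge_adj]; exact ⟨Or.inl ⟨rfl, rfl⟩, hne⟩)
      exact hnotin (Set.mem_iUnion.2 ⟨i, hadj⟩)
    have hle : ∀ i, F i ≤ SimpleGraph.fromEdgeSet (⋃ i, (F i).edgeSet) := by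
      intro i
      rw [← fromEdgeSet_edgeSet (F i)]
      exact fromEdgeSet_mono (Set.subset_iUnion (fun i => (F i).edgeSet) i)
    set p : ∀ i : Fin (k + 1), (F i).Walk u v := fun i => ((hreach i).some.toPath : (F i).Walk u v)
      with hp
    refine ⟨fun i => (p i).mapLe (hle i), fun i => Walk.IsPath.mapLe (hle i) (hreach i).some.toPath.2, ?_⟩
    · intro i j hij e hei hej
      rw [edges_mapLe] at hei hej
      have h1 : e ∈ (F i).edgeSet := (p i).edges_subset_edgeSet hei
      have h2 : e ∈ (F j).edgeSet := (p j).edges_subset_edgeSet hej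
      rcases Ne.lt_or_gt hij with h | h
      · exact hdisj j i h e h2 h1
      · exact hdisj i j h e h1 h2
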